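/- Let H be a separable complex Hilbert space and let P be a bounded idempotent operator on H. Then P + P* - I is invertible with inverse (P + P* - I)⁻¹ = P_{R(P)} - P_{N(P)}, where P_{R(P)} and P_{N(P)} are the orthogonal projections onto the range and kernel of P respectively; moreover P = P_{R(P)}(P_{R(P)} - P_{N(P)})⁻¹ and P_{N(P)} = -(I - P)(P + P* - I)⁻¹. -/

import Mathlib

open ContinuousLinearMap

variable {H : Type*} [NormedAddCommGroup H] [InnerProductSpace ℂ H]
  [CompleteSpace H] [TopologicalSpace.SeparableSpace H]

/-- The absolute value `|A| = (A*A)^(1/2)` of a bounded operator. -/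
noncomputable def absOp (A : H →L[ℂ] H) : H →L[ℂ] H := CFC.sqrt (star A * A)

/-- A symmetry is a self-adjoint unitary: `J = J* = J⁻¹`. -/
def IsSymmetry (J : H →L[ℂ] H) : Prop := IsSelfAdjoint J ∧ J * J = 1


/-- `Q` is the orthogonal projection onto the (closed) subspace `M`. -/
def IsOrthoProjOnto (Q : H →L[ℂ] H) (M : Submodule ℂ H) : Prop :=
  IsSelfAdjoint Q ∧ Q * Q = Q ∧ LinearMap.range (Q : H →ₗ[ℂ] H) = M

theorem stmt_7 (P PR PN : H →L[ℂ] H) (hP : P * P = P)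
    (hPR : IsOrthoProjOnto PR (LinearMap.range (P : H →ₗ[ℂ] H)))
    (hPN : IsOrthoProjOnto PN (LinearMap.ker (P : H →ₗ[ℂ] H))) :
    IsUnit (P + star P - 1) ∧
    Ring.inverse (P + star P - 1) = PR - PN ∧
    P = PR * Ring.inverse (PR - PN) ∧
    PN = -((1 - P) * Ring.inverse (P + star P - 1)) := by
  obtain ⟨hRsa, hRidem, hRrange⟩ := hPR
  obtain ⟨hNsa, hNidem, hNrange⟩ := hPN
  -- P fixes range P, hence P * PR = PR
  have h1 : P * PR = PR := by
    ext x
    obtain ⟨y, hy⟩ : PR x ∈ LinearMap.range (P : H →ₗ[ℂ] H) := hRrange ▸ LinearMap.mem_range_self _ x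
    rw [ContinuousLinearMap.coe_coe] at hy
    have : P (P y) = P y := by rw [← ContinuousLinearMap.mul_apply, hP]
    simp only [ContinuousLinearMap.mul_apply, ← hy, this]
  -- PR fixes its range = range P, hence PR * P = P
  have h2 : PR * P = P := by
    ext x
    obtain ⟨y, hy⟩ : P x ∈ LinearMap.range (PR : H →ₗ[ℂ] H) := by
      rw [hRrange]; exact LinearMap.mem_range_self _ x
    rw [ContinuousLinearMap.coe_coe] at hy
    have : PR (PR y) = PR y := by rw [← ContinuousLinearMap.mul_apply, hRidem]
    simp only [ContinuousLinearMap.mul_apply, ← hy, this]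
  -- range PN = ker P, hence P * PN = 0
  have h3 : P * PN = 0 := by
    ext x
    have : PN x ∈ LinearMap.ker (P : H →ₗ[ℂ] H) := hNrange ▸ LinearMap.mem_range_self _ x
    simpa [ContinuousLinearMap.mul_apply] using this
  -- PN fixes ker P, and x - P x ∈ ker P, hence PN * P = PN + P - 1
  have h4 : PN * P = PN + P - 1 := by
    have hfix : ∀ z, P z = 0 → PN z = z := by
      intro z hz
      obtain ⟨y, hy⟩ : z ∈ LinearMap.range (PN : H →ₗ[ℂ] H) := by
        rw [hNrange]; exact hz
      rw [ContinuousLinearMap.coe_coe] at hy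
      have : PN (PN y) = PN y := by rw [← ContinuousLinearMap.mul_apply, hNidem]
      rw [← hy, this]
    ext x
    have hker : P (x - P x) = 0 := by
      have : P (P x) = P x := by rw [← ContinuousLinearMap.mul_apply, hP]
      simp [map_sub, this]
    have := hfix _ hker
    simp only [map_sub] at this
    simp only [ContinuousLinearMap.mul_apply, ContinuousLinearMap.add_apply, ContinuousLinearMap.sub_apply, ContinuousLinearMap.one_apply]
    linear_combination (norm := abel) -this
  -- adjoint versions
  have hs1 : PR * star P = PR := by
    have := congrArg star h1
    simpa [star_mul, hRsa.star_eq] using this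
  have hs2 : star P * PR = star P := by
    have := congrArg star h2
    simpa [star_mul, hRsa.star_eq] using this
  have hs3 : PN * star P = 0 := by
    have := congrArg star h3
    simpa [star_mul, hNsa.star_eq] using this
  have hs4 : star P * PN = PN + star P - 1 := by
    have := congrArg star h4
    simpa [star_mul, star_sub, star_add, hNsa.star_eq] using this
  -- two-sided inverse
  have mul1 : (P + star P - 1) * (PR - PN) = 1 := by
    rw [sub_mul, add_mul, mul_sub, mul_sub, h1, h3, hs2, hs4, one_mul]
    abel
  have mul2 : (PR - PN) * (P + star P - 1) = 1 := by
    rw [sub_mul, mul_sub, mul_sub, mul_add, mul_add, h2, hs1, h4, hs3, mul_one, mul_one]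
    abel
  set u : (H →L[ℂ] H)ˣ := ⟨P + star P - 1, PR - PN, mul1, mul2⟩ with hu
  have hunit : IsUnit (P + star P - 1) := ⟨u, rfl⟩
  have hinv : Ring.inverse (P + star P - 1) = PR - PN := by
    have := Ring.inverse_unit u
    simpa [hu] using this
  have hinv' : Ring.inverse (PR - PN) = P + star P - 1 := by
    have := Ring.inverse_unit u⁻¹
    simpa [hu] using this
  refine ⟨hunit, hinv, ?_, ?_⟩
  · rw [hinv', mul_sub, mul_add, h2, hs1, mul_one]
    abel
  · rw [hinv, sub_mul, one_mul, mul_sub, h1, h3]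
    abel
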